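/- Let R = ℂ[x,y,z]/(x²z − y² + 1) be the coordinate ring of the second Danielewski surface Y. Then Ω_{R/ℂ} is a free R-module of rank 2; in particular the relation 2xz·dx + x²·dz − 2y·dy = 0 holds in Ω_{R/ℂ} and Ω_{R/ℂ} admits an R-basis of two elements. -/

import Mathlib

open MvPolynomial

/-- The defining polynomial `x²z − y² + 1` of the second Danielewski surface `Y`. -/
noncomputable def gY : MvPolynomial (Fin 3) ℂ := X 0 ^ 2 * X 2 - X 1 ^ 2 + 1

/-- The coordinate ring `R = ℂ[x,y,z]/(x²z − y² + 1)` of `Y`. -/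
abbrev RY := MvPolynomial (Fin 3) ℂ ⧸ Ideal.span {gY}

noncomputable def mkY : MvPolynomial (Fin 3) ℂ →+* RY := Ideal.Quotient.mk _

set_option maxHeartbeats 1000000
set_option synthInstance.maxHeartbeats 400000

abbrev NY := Fin 2 → RY

/-- values of the derivation on generators -/
noncomputable def vY : Fin 3 → NY :=
  ![![1, 0],
    ![mkY (X 0 * X 1 * X 2), mkY (C 2⁻¹ * X 0 ^ 2)],
    ![mkY (C 2 * X 0 * X 2 ^ 2), mkY (X 1)]]


lemma mkY_eq_zero {p : MvPolynomial (Fin 3) ℂ} (h : gY ∣ p) : mkY p = 0 := by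
  rw [mkY]
  exact Ideal.Quotient.eq_zero_iff_mem.mpr (Ideal.mem_span_singleton.mpr h)

lemma C2_eq : (C 2 : MvPolynomial (Fin 3) ℂ) = 2 := map_ofNat C 2

lemma Chalf_eq : (C (2⁻¹ : ℂ) : MvPolynomial (Fin 3) ℂ) * 2 = 1 := by
  rw [← C2_eq, ← map_mul]; norm_num

lemma two_eq : (2 : RY) = mkY 2 := (map_ofNat mkY 2).symm

noncomputable def δ₀ : Derivation ℂ (MvPolynomial (Fin 3) ℂ) NY :=
  MvPolynomial.mkDerivation ℂ vY

example (p : MvPolynomial (Fin 3) ℂ) (n : NY) : p • n = mkY p • n := by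
  rw [mkY, ← Ideal.Quotient.algebraMap_eq, algebraMap_smul]

lemma δ₀_g : δ₀ gY = 0 := by
  have h1 : ∀ (p : MvPolynomial (Fin 3) ℂ) (n : NY), p • n = mkY p • n := by
    intro p n; rw [mkY, ← Ideal.Quotient.algebraMap_eq, algebraMap_smul]
  simp only [gY, δ₀, map_add, map_sub, map_one, Derivation.leibniz, Derivation.leibniz_pow,
    MvPolynomial.mkDerivation_X, map_one, Derivation.map_one_eq_zero]
  funext i
  fin_cases i
  case _ =>
    simp [vY, h1, ← map_mul, ← map_pow]
    simp only [two_eq, ← map_mul, ← map_add, ← map_sub]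
    exact mkY_eq_zero ⟨C 2 * X 0 * X 2, by unfold gY; linear_combination (X 1 ^ 2 * X 0 * X 2 - X 0 * X 2) * C2_eq⟩
  case _ =>
    simp [vY, h1, ← map_mul, ← map_pow]
    simp only [two_eq, ← map_mul, ← map_add, ← map_sub]
    exact mkY_eq_zero ⟨0, by linear_combination (- X 0 ^ 2 * X 1) * Chalf_eq⟩

lemma mkY_surjective : Function.Surjective mkY := Ideal.Quotient.mk_surjective

lemma smul_eq_mkY_smul (p : MvPolynomial (Fin 3) ℂ) (n : NY) : p • n = mkY p • n := by
  rw [mkY, ← Ideal.Quotient.algebraMap_eq, algebraMap_smul]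

lemma hvanish : (Ideal.span {gY}).restrictScalars ℂ ≤ LinearMap.ker (δ₀.toLinearMap) := by
  intro p hp
  obtain ⟨f, rfl⟩ := Ideal.mem_span_singleton.mp hp
  simp only [LinearMap.mem_ker, Derivation.coeFn_coe, Derivation.leibniz, δ₀_g, smul_zero,
    add_zero, smul_eq_mkY_smul, mkY_eq_zero dvd_rfl]
  exact zero_smul RY (δ₀ f)

noncomputable def δlin : RY →ₗ[ℂ] NY :=
  (Submodule.liftQ ((Ideal.span {gY}).restrictScalars ℂ) δ₀.toLinearMap hvanish).comp
    ((Submodule.Quotient.restrictScalarsEquiv ℂ (Ideal.span {gY})).symm.toLinearMap)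

lemma δlin_mk (p : MvPolynomial (Fin 3) ℂ) : δlin (mkY p) = δ₀ p := by
  rw [δlin, mkY, LinearMap.comp_apply, LinearEquiv.coe_toLinearMap, ← Ideal.Quotient.mk_eq_mk,
    Submodule.Quotient.restrictScalarsEquiv_symm_mk, Submodule.liftQ_apply, Derivation.coeFn_coe]

noncomputable def δY : Derivation ℂ RY NY where
  toLinearMap := δlin
  map_one_eq_zero' := by
    show δlin 1 = 0
    rw [show (1 : RY) = mkY 1 from (map_one mkY).symm, δlin_mk, Derivation.map_one_eq_zero]
  leibniz' := by
    intro a b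
    obtain ⟨p, rfl⟩ := mkY_surjective a
    obtain ⟨q, rfl⟩ := mkY_surjective b
    show δlin (mkY p * mkY q) = mkY p • δlin (mkY q) + mkY q • δlin (mkY p)
    rw [← map_mul, δlin_mk, δlin_mk, δlin_mk, Derivation.leibniz,
      smul_eq_mkY_smul, smul_eq_mkY_smul]

lemma δY_mk (p : MvPolynomial (Fin 3) ℂ) : δY (mkY p) = δ₀ p := δlin_mk p

noncomputable def ψY : (Ω[RY⁄ℂ]) →ₗ[RY] NY := δY.liftKaehlerDifferential

noncomputable def b1 : Ω[RY⁄ℂ] := (KaehlerDifferential.D ℂ RY) (mkY (X 0))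

noncomputable def b2 : Ω[RY⁄ℂ] :=
  (-(2 * mkY (X 2))) • (KaehlerDifferential.D ℂ RY) (mkY (X 1)) +
    mkY (X 1) • (KaehlerDifferential.D ℂ RY) (mkY (X 2))

noncomputable def φY : NY →ₗ[RY] (Ω[RY⁄ℂ]) :=
  (LinearMap.proj (0 : Fin 2)).smulRight b1 + (LinearMap.proj (1 : Fin 2)).smulRight b2

lemma φY_apply (v : NY) : φY v = v 0 • b1 + v 1 • b2 := rfl

lemma hyY : mkY (X 1) ^ 2 - mkY (X 0) ^ 2 * mkY (X 2) = 1 := by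
  have h := mkY_eq_zero (p := X 1 ^ 2 - X 0 ^ 2 * X 2 - 1) ⟨-1, by unfold gY; ring⟩
  rw [map_sub, map_sub, map_pow, map_mul, map_pow, map_one, sub_eq_zero] at h
  exact h

lemma hhalfY : (2 : RY) * mkY (C (2⁻¹ : ℂ)) = 1 := by
  rw [two_eq, ← map_mul, ← map_one mkY]
  congr 1
  rw [← C2_eq, ← map_mul]
  norm_num

lemma relY :
    (2 * mkY (X 0) * mkY (X 2)) • (KaehlerDifferential.D ℂ RY) (mkY (X 0)) +
      (mkY (X 0) ^ 2) • (KaehlerDifferential.D ℂ RY) (mkY (X 2)) -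
      (2 * mkY (X 1)) • (KaehlerDifferential.D ℂ RY) (mkY (X 1)) = 0 := by
  have h0 : (KaehlerDifferential.D ℂ RY) (mkY (X 0 ^ 2 * X 2 - X 1 ^ 2 + 1)) = 0 := by
    rw [mkY_eq_zero (p := X 0 ^ 2 * X 2 - X 1 ^ 2 + 1) dvd_rfl, map_zero]
  rw [map_add, map_sub, map_mul, map_pow, map_pow, map_one] at h0
  rw [map_add, map_sub, Derivation.leibniz, Derivation.leibniz_pow, Derivation.leibniz_pow,
    Derivation.map_one_eq_zero] at h0
  linear_combination (norm := module) h0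

lemma ψY_D (a : RY) : ψY ((KaehlerDifferential.D ℂ RY) a) = δY a :=
  Derivation.liftKaehlerDifferential_comp_D δY a

lemma δ₀_X (i : Fin 3) : δ₀ (X i) = vY i := MvPolynomial.mkDerivation_X ℂ vY i

lemma hyD (m : Ω[RY⁄ℂ]) : (mkY (X 1) ^ 2 - mkY (X 0) ^ 2 * mkY (X 2)) • m = m := by
  rw [hyY, one_smul RY m]

lemma gen0 : φY (vY 0) = (KaehlerDifferential.D ℂ RY) (mkY (X 0)) := by
  rw [φY_apply]
  simp only [vY, Matrix.cons_val_zero, Matrix.cons_val_one, Matrix.head_cons]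
  rw [one_smul RY b1, zero_smul RY b2, add_zero, b1]

lemma gen1 : φY (vY 1) = (KaehlerDifferential.D ℂ RY) (mkY (X 1)) := by
  rw [φY_apply]
  simp only [vY, Matrix.cons_val_zero, Matrix.cons_val_one, Matrix.head_cons]
  rw [map_mul, map_mul, map_mul, map_pow]
  have key : ∀ m m' : Ω[RY⁄ℂ], (2 : RY) • m = (2 : RY) • m' → m = m' := by
    intro m m' h
    have h2 := congrArg (fun w => mkY (C (2⁻¹ : ℂ)) • w) h
    simpa [smul_smul (M := RY) (α := Ω[RY⁄ℂ]), mul_comm (mkY (C (2⁻¹ : ℂ))) 2, hhalfY, one_smul RY] using h2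
  apply key
  rw [smul_add (2 : RY) (_ : Ω[RY⁄ℂ]), smul_smul (M := RY) (α := Ω[RY⁄ℂ]), smul_smul (M := RY) (α := Ω[RY⁄ℂ]),
    show (2 : RY) * (mkY (C (2⁻¹ : ℂ)) * mkY (X 0) ^ 2) = mkY (X 0) ^ 2 by
      rw [← mul_assoc, hhalfY, one_mul]]
  unfold b1 b2
  linear_combination (norm := module) mkY (X 1) • relY +
    (2 : RY) • hyD ((KaehlerDifferential.D ℂ RY) (mkY (X 1)))

lemma gen2 : φY (vY 2) = (KaehlerDifferential.D ℂ RY) (mkY (X 2)) := by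
  rw [φY_apply]
  simp only [vY, Matrix.cons_val_zero, Matrix.cons_val_one, Matrix.head_cons,
    Matrix.cons_val_two, Matrix.tail_cons]
  rw [map_mul, map_mul, map_pow, C2_eq, ← two_eq]
  unfold b1 b2
  linear_combination (norm := module) mkY (X 2) • relY +
    hyD ((KaehlerDifferential.D ℂ RY) (mkY (X 2)))

lemma htop : Algebra.adjoin ℂ (Set.range fun i => mkY (X i)) = ⊤ := by
  have h1 := MvPolynomial.adjoin_range_X (R := ℂ) (σ := Fin 3)
  have h2 : Set.range (fun i => mkY (X i)) =
      (Ideal.Quotient.mkₐ ℂ (Ideal.span {gY})) '' Set.range X := by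
    rw [← Set.range_comp]; rfl
  rw [h2, ← AlgHom.map_adjoin, h1, Algebra.map_top]
  exact (AlgHom.range_eq_top _).mpr (Ideal.Quotient.mkₐ_surjective ℂ _)

lemma hφψ : φY.comp ψY = LinearMap.id := by
  refine Derivation.liftKaehlerDifferential_unique _ _ ?_
  refine Derivation.ext_of_adjoin_eq_top _ htop ?_
  rintro _ ⟨i, rfl⟩
  have : ∀ a : RY, ((φY.comp ψY).compDer (KaehlerDifferential.D ℂ RY)) a = φY (ψY ((KaehlerDifferential.D ℂ RY) a)) := fun a => rfl
  have h2 : ∀ a : RY, ((LinearMap.id :(Ω[RY⁄ℂ]) →ₗ[RY] (Ω[RY⁄ℂ])).compDer (KaehlerDifferential.D ℂ RY)) a = (KaehlerDifferential.D ℂ RY) a := fun a => rfl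
  rw [this, h2, ψY_D, δY_mk, δ₀_X]
  fin_cases i
  · exact gen0
  · exact gen1
  · exact gen2

lemma hψφ : ψY.comp φY = LinearMap.id := by
  refine (Pi.basisFun RY (Fin 2)).ext fun i => ?_
  rw [LinearMap.comp_apply, LinearMap.id_apply, Pi.basisFun_apply, φY_apply]
  fin_cases i
  · simp only [Pi.single_apply]
    norm_num
    rw [b1, ψY_D, δY_mk, δ₀_X]
    funext j
    fin_cases j <;> simp [vY, Pi.single_apply]
  · simp only [Pi.single_apply]
    norm_num
    rw [b2, map_add, map_smul, map_smul, ψY_D, ψY_D, δY_mk, δY_mk, δ₀_X, δ₀_X]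
    funext j
    fin_cases j <;> simp [vY, Pi.single_apply, map_mul, map_pow, C2_eq]
    · rw [← two_eq]; ring
    · linear_combination (- mkY (X 2) * mkY (X 0) ^ 2) * hhalfY + hyY

/-- For `R = ℂ[x,y,z]/(x²z − y² + 1)`, the Kähler differentials `Ω_{R/ℂ}` satisfy
the relation `2xz·dx + x²·dz − 2y·dy = 0` and form a free `R`-module of rank 2. -/
theorem kaehler_RY_free_rank_two :
    ((2 * mkY (X 0) * mkY (X 2)) • (KaehlerDifferential.D ℂ RY) (mkY (X 0)) +
      (mkY (X 0) ^ 2) • (KaehlerDifferential.D ℂ RY) (mkY (X 2)) -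
      (2 * mkY (X 1)) • (KaehlerDifferential.D ℂ RY) (mkY (X 1)) = 0) ∧
    Nonempty (Module.Basis (Fin 2) RY (Ω[RY⁄ℂ])) := by
  refine ⟨relY, ⟨(Pi.basisFun RY (Fin 2)).map (LinearEquiv.ofLinear φY ψY hφψ hψφ)⟩⟩
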